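/- Let Z be a standard Gaussian random variable. Then lim_{λ→0⁺} (1/λ)·( λ − ∫_ℝ (1/√(2π))·e^{−z²/2} · ln cosh(λ + √λ·z) dz ) = 1/2. -/

import Mathlib

open Real MeasureTheory Filter Set

lemma logcosh_le (x : ℝ) : Real.log (Real.cosh x) ≤ x ^ 2 / 2 := by
  calc Real.log (Real.cosh x) ≤ Real.log (Real.exp (x ^ 2 / 2)) :=
        Real.log_le_log (Real.cosh_pos x) (Real.cosh_le_exp_half_sq x)
    _ = x ^ 2 / 2 := Real.log_exp _

lemma one_add_le_cosh (x : ℝ) : 1 + x ^ 2 / 2 ≤ Real.cosh x := by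
  have h := sum_le_hasSum (Finset.range 2)
    (fun i _ => div_nonneg (by rw [pow_mul]; positivity) (by positivity))
    (Real.hasSum_cosh x)
  simpa [Finset.sum_range_succ, Nat.factorial] using h

lemma log_one_add_ge {u : ℝ} (hu : 0 ≤ u) : u - u ^ 2 ≤ Real.log (1 + u) := by
  have hpos : (0:ℝ) < 1 + u := by linarith
  have h := Real.log_le_sub_one_of_pos (inv_pos.mpr hpos)
  rw [Real.log_inv] at h
  have key : (1 + u)⁻¹ * (1 + u) = 1 := inv_mul_cancel₀ hpos.ne'
  nlinarith [inv_nonneg.mpr hpos.le]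

lemma logcosh_ge (x : ℝ) : x ^ 2 / 2 - x ^ 4 / 4 ≤ Real.log (Real.cosh x) := by
  have h2 : Real.log (1 + x ^ 2 / 2) ≤ Real.log (Real.cosh x) :=
    Real.log_le_log (by positivity) (one_add_le_cosh x)
  have h3 := log_one_add_ge (show (0:ℝ) ≤ x ^ 2 / 2 by positivity)
  nlinarith [h3, h2]

lemma integrable_pow_gauss (n : ℕ) :
    Integrable (fun x : ℝ => x ^ n * Real.exp (-x ^ 2 / 2)) := by
  have hint : Integrable (fun x : ℝ => ((n.factorial : ℝ) * Real.exp 1) * Real.exp (-(1/4) * x ^ 2)) :=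
    (integrable_exp_neg_mul_sq (by norm_num)).const_mul _
  apply hint.mono'
  · exact (Continuous.mul (continuous_pow n) (Continuous.rexp (by continuity))).aestronglyMeasurable
  · filter_upwards with x
    have h1 : |x| ^ n ≤ n.factorial * Real.exp |x| := by
      have := Real.pow_div_factorial_le_exp _ (abs_nonneg x) n
      rw [div_le_iff₀ (by positivity)] at this
      linarith [this]
    have h2 : Real.exp (|x| - x ^ 2 / 2) ≤ Real.exp (1 - x ^ 2 / 4) := by
      apply Real.exp_le_exp.mpr
      nlinarith [sq_nonneg (|x| / 2 - 1), sq_abs x]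
    rw [norm_mul, norm_pow, norm_eq_abs, norm_eq_abs, abs_exp]
    calc |x| ^ n * Real.exp (-x ^ 2 / 2)
        ≤ (n.factorial * Real.exp |x|) * Real.exp (-x ^ 2 / 2) := by
          apply mul_le_mul_of_nonneg_right h1 (Real.exp_pos _).le
      _ = n.factorial * Real.exp (|x| - x ^ 2 / 2) := by
          rw [mul_assoc, ← Real.exp_add]; ring_nf
      _ ≤ n.factorial * Real.exp (1 - x ^ 2 / 4) := by
          exact mul_le_mul_of_nonneg_left h2 (by positivity)
      _ = (n.factorial * Real.exp 1) * Real.exp (-(1/4) * x ^ 2) := by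
          rw [mul_assoc, ← Real.exp_add]; ring_nf

lemma hasDerivAt_negG (x : ℝ) :
    HasDerivAt (fun z : ℝ => -Real.exp (-z ^ 2 / 2)) (x * Real.exp (-x ^ 2 / 2)) x := by
  have h : HasDerivAt (fun z : ℝ => -z ^ 2 / 2) (-x) x := by
    have := (hasDerivAt_pow 2 x).neg.div_const 2
    simpa using this.congr_deriv (by push_cast; ring)
  have : HasDerivAt (fun z : ℝ => -Real.exp (-z ^ 2 / 2)) (-(Real.exp (-x ^ 2 / 2) * -x)) x := (h.exp).neg
  convert this using 1
  ring

lemma gauss_mom0 : ∫ x : ℝ, Real.exp (-x ^ 2 / 2) = Real.sqrt (2 * Real.pi) := by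
  have h := integral_gaussian (1/2 : ℝ)
  rw [show (π / (1/2 : ℝ)) = 2 * π by ring] at h
  rw [← h]
  congr 1 with x
  ring_nf

lemma gauss_mom_rec (n : ℕ) :
    ∫ x : ℝ, x ^ (n + 2) * Real.exp (-x ^ 2 / 2)
      = (n + 1) * ∫ x : ℝ, x ^ n * Real.exp (-x ^ 2 / 2) := by
  have hu : ∀ x : ℝ, HasDerivAt (fun z : ℝ => z ^ (n+1)) ((n+1 : ℕ) * x ^ n) x :=
    fun x => by simpa using hasDerivAt_pow (n+1) x
  have hv := hasDerivAt_negG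
  have huv' : Integrable ((fun z : ℝ => z ^ (n+1)) * (fun x => x * Real.exp (-x ^ 2 / 2))) := by
    have := integrable_pow_gauss (n+2)
    apply this.congr
    filter_upwards with x
    simp [Pi.mul_apply]; ring
  have hu'v : Integrable ((fun x : ℝ => ((n+1 : ℕ) : ℝ) * x ^ n) * (fun z : ℝ => -Real.exp (-z ^ 2 / 2))) := by
    have := ((integrable_pow_gauss n).const_mul ((n+1 : ℕ) : ℝ)).neg
    apply this.congr
    filter_upwards with x
    simp [Pi.mul_apply]; ring
  have huv : Integrable ((fun z : ℝ => z ^ (n+1)) * (fun z : ℝ => -Real.exp (-z ^ 2 / 2))) := by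
    have := (integrable_pow_gauss (n+1)).neg
    apply this.congr
    filter_upwards with x
    simp [Pi.mul_apply]
  have h := integral_mul_deriv_eq_deriv_mul_of_integrable (fun x _ => hu x) (fun x _ => hv x) huv' hu'v huv
  calc ∫ x : ℝ, x ^ (n + 2) * Real.exp (-x ^ 2 / 2)
      = ∫ x : ℝ, x ^ (n+1) * (x * Real.exp (-x ^ 2 / 2)) := by
        congr 1 with x; ring
    _ = - ∫ x : ℝ, ((n+1 : ℕ) : ℝ) * x ^ n * (-Real.exp (-x ^ 2 / 2)) := h
    _ = (n + 1) * ∫ x : ℝ, x ^ n * Real.exp (-x ^ 2 / 2) := by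
        rw [← integral_neg, ← integral_const_mul]
        congr 1 with x; push_cast; ring

lemma gauss_mom1 : ∫ x : ℝ, x ^ 1 * Real.exp (-x ^ 2 / 2) = 0 := by
  have hu : ∀ x : ℝ, HasDerivAt (fun _ : ℝ => (1:ℝ)) ((fun _ : ℝ => (0:ℝ)) x) x :=
    fun x => hasDerivAt_const x 1
  have hv := hasDerivAt_negG
  have huv' : Integrable ((fun _ : ℝ => (1:ℝ)) * (fun x => x * Real.exp (-x ^ 2 / 2))) := by
    apply (integrable_pow_gauss 1).congr
    filter_upwards with x; simp [Pi.mul_apply]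
  have hu'v : Integrable ((fun _ : ℝ => (0:ℝ)) * (fun z : ℝ => -Real.exp (-z ^ 2 / 2))) := by
    apply (integrable_zero ℝ ℝ (volume : Measure ℝ)).congr
    filter_upwards with x; simp [Pi.mul_apply]
  have huv : Integrable ((fun _ : ℝ => (1:ℝ)) * (fun z : ℝ => -Real.exp (-z ^ 2 / 2))) := by
    apply ((integrable_exp_neg_mul_sq (by norm_num : (0:ℝ) < 1/2)).neg).congr
    filter_upwards with x; simp [Pi.mul_apply]; ring_nf
  have h := integral_mul_deriv_eq_deriv_mul_of_integrable (fun x _ => hu x) (fun x _ => hv x) huv' hu'v huv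
  simp only [one_mul, zero_mul] at h
  simpa using h

lemma gauss_mom2 : ∫ x : ℝ, x ^ 2 * Real.exp (-x ^ 2 / 2) = Real.sqrt (2 * Real.pi) := by
  have h := gauss_mom_rec 0
  simp only [pow_zero, one_mul] at h
  rw [h, gauss_mom0]; norm_num

lemma gauss_mom3 : ∫ x : ℝ, x ^ 3 * Real.exp (-x ^ 2 / 2) = 0 := by
  have h := gauss_mom_rec 1
  rw [h, gauss_mom1]; norm_num

lemma gauss_mom4 : ∫ x : ℝ, x ^ 4 * Real.exp (-x ^ 2 / 2) = 3 * Real.sqrt (2 * Real.pi) := by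
  have h := gauss_mom_rec 2
  rw [h, gauss_mom2]; norm_num

lemma integrable_poly_gauss (c0 c1 c2 c3 c4 : ℝ) :
    Integrable (fun z : ℝ =>
      (c0 + c1*z + c2*z^2 + c3*z^3 + c4*z^4) * Real.exp (-z ^ 2 / 2)) := by
  have h : (fun z : ℝ => (c0 + c1*z + c2*z^2 + c3*z^3 + c4*z^4) * Real.exp (-z ^ 2 / 2))
      = fun z : ℝ => c0 * (z^0 * Real.exp (-z ^ 2 / 2)) + (c1 * (z^1 * Real.exp (-z ^ 2 / 2))
        + (c2 * (z^2 * Real.exp (-z ^ 2 / 2)) + (c3 * (z^3 * Real.exp (-z ^ 2 / 2))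
        + c4 * (z^4 * Real.exp (-z ^ 2 / 2))))) := funext fun z => by ring
  rw [h]
  exact ((integrable_pow_gauss 0).const_mul c0).add
    (((integrable_pow_gauss 1).const_mul c1).add
      (((integrable_pow_gauss 2).const_mul c2).add
        (((integrable_pow_gauss 3).const_mul c3).add
          ((integrable_pow_gauss 4).const_mul c4))))

lemma integral_poly_gauss (c0 c1 c2 c3 c4 : ℝ) :
    ∫ z : ℝ, (c0 + c1*z + c2*z^2 + c3*z^3 + c4*z^4) * Real.exp (-z ^ 2 / 2)
      = (c0 + c2 + 3*c4) * Real.sqrt (2 * Real.pi) := by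
  set C : ℕ → ℝ := fun i =>
    if i = 0 then c0 else if i = 1 then c1 else if i = 2 then c2
      else if i = 3 then c3 else c4 with hC
  have h : (fun z : ℝ => (c0 + c1*z + c2*z^2 + c3*z^3 + c4*z^4) * Real.exp (-z ^ 2 / 2))
      = fun z : ℝ => ∑ i ∈ Finset.range 5, C i * (z ^ i * Real.exp (-z ^ 2 / 2)) := by
    funext z
    simp only [hC, Finset.sum_range_succ, Finset.sum_range_zero]
    norm_num; ring
  rw [h, integral_finset_sum _ (fun i _ => (integrable_pow_gauss i).const_mul (C i))]
  simp only [integral_const_mul, Finset.sum_range_succ, Finset.sum_range_zero]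
  rw [gauss_mom1, gauss_mom2, gauss_mom3, gauss_mom4]
  have h0 : ∫ x : ℝ, x ^ 0 * Real.exp (-x ^ 2 / 2) = Real.sqrt (2 * Real.pi) := by
    simpa using gauss_mom0
  rw [h0]
  simp only [hC]
  norm_num; ring

/-- With `Z` standard Gaussian,
`lim_{λ→0⁺} (1/λ)·( λ − ∫_ℝ (1/√(2π)) e^{−z²/2} ln cosh(λ + √λ·z) dz ) = 1/2`. -/
theorem stmt_13 :
    Filter.Tendsto
      (fun lam : ℝ => (1 / lam) * (lam -
        ∫ z : ℝ, (1 / Real.sqrt (2 * Real.pi)) * Real.exp (-z ^ 2 / 2) *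
          Real.log (Real.cosh (lam + Real.sqrt lam * z))))
      (nhdsWithin 0 (Set.Ioi 0)) (nhds (1 / 2)) := by
  have h2π : (0:ℝ) < Real.sqrt (2 * Real.pi) := Real.sqrt_pos.mpr (by positivity)
  have hcs : (1 / Real.sqrt (2 * Real.pi)) * Real.sqrt (2 * Real.pi) = 1 := by
    field_simp
  have key : ∀ lam : ℝ, lam ∈ Ioi (0:ℝ) →
      1/2 - lam/2 ≤ (1 / lam) * (lam -
        ∫ z : ℝ, (1 / Real.sqrt (2 * Real.pi)) * Real.exp (-z ^ 2 / 2) *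
          Real.log (Real.cosh (lam + Real.sqrt lam * z)))
      ∧ (1 / lam) * (lam -
        ∫ z : ℝ, (1 / Real.sqrt (2 * Real.pi)) * Real.exp (-z ^ 2 / 2) *
          Real.log (Real.cosh (lam + Real.sqrt lam * z)))
        ≤ 1/2 - lam/2 + (lam^3 + 6*lam^2 + 3*lam)/4 := by
    intro lam hlam
    rw [Set.mem_Ioi] at hlam
    set c : ℝ := 1 / Real.sqrt (2 * Real.pi) with hc
    have hcpos : 0 < c := by positivity
    set s : ℝ := Real.sqrt lam with hsdef
    have hs : s ^ 2 = lam := Real.sq_sqrt hlam.le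
    set f : ℝ → ℝ := fun z => c * Real.exp (-z ^ 2 / 2) *
      Real.log (Real.cosh (lam + s * z)) with hf
    -- pointwise bounds
    have hfU : ∀ z : ℝ, f z ≤ (c*(lam^2/2) + (c*(lam*s))*z + (c*(s^2/2))*z^2
        + 0*z^3 + 0*z^4) * Real.exp (-z ^ 2 / 2) := by
      intro z
      have hnn : (0:ℝ) ≤ c * Real.exp (-z ^ 2 / 2) := by positivity
      have h := mul_le_mul_of_nonneg_left (logcosh_le (lam + s * z)) hnn
      calc f z = (c * Real.exp (-z ^ 2 / 2)) * Real.log (Real.cosh (lam + s * z)) := by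
            rw [hf]
        _ ≤ (c * Real.exp (-z ^ 2 / 2)) * ((lam + s*z)^2/2) := h
        _ = (c*(lam^2/2) + (c*(lam*s))*z + (c*(s^2/2))*z^2
            + 0*z^3 + 0*z^4) * Real.exp (-z ^ 2 / 2) := by ring
    have hLf : ∀ z : ℝ, (c*(lam^2/2 - lam^4/4) + (c*(lam*s - lam^3*s))*z
        + (c*(s^2/2 - 3*lam^2*s^2/2))*z^2 + (c*(-(lam*s^3)))*z^3
        + (c*(-(s^4/4)))*z^4) * Real.exp (-z ^ 2 / 2) ≤ f z := by
      intro z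
      have hnn : (0:ℝ) ≤ c * Real.exp (-z ^ 2 / 2) := by positivity
      have h := mul_le_mul_of_nonneg_left (logcosh_ge (lam + s * z)) hnn
      calc (c*(lam^2/2 - lam^4/4) + (c*(lam*s - lam^3*s))*z
            + (c*(s^2/2 - 3*lam^2*s^2/2))*z^2 + (c*(-(lam*s^3)))*z^3
            + (c*(-(s^4/4)))*z^4) * Real.exp (-z ^ 2 / 2)
          = (c * Real.exp (-z ^ 2 / 2)) * ((lam + s*z)^2/2 - (lam + s*z)^4/4) := by ring
        _ ≤ (c * Real.exp (-z ^ 2 / 2)) * Real.log (Real.cosh (lam + s * z)) := h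
        _ = f z := by rw [hf]
    -- integrability of f
    have hcont : Continuous f := by
      rw [hf]
      apply Continuous.mul
      · exact continuous_const.mul (Continuous.rexp (by continuity))
      · exact Continuous.log (Real.continuous_cosh.comp (by continuity))
          (fun x => (Real.cosh_pos _).ne')
    have hfnn : ∀ z : ℝ, 0 ≤ f z := by
      intro z
      rw [hf]
      exact mul_nonneg (mul_nonneg hcpos.le (Real.exp_pos _).le)
        (Real.log_nonneg (Real.one_le_cosh _))
    have hf_int : Integrable f := by
      apply (integrable_poly_gauss (c*(lam^2/2)) (c*(lam*s)) (c*(s^2/2)) 0 0).mono'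
        hcont.aestronglyMeasurable
      filter_upwards with z
      rw [Real.norm_eq_abs, abs_of_nonneg (hfnn z)]
      exact hfU z
    -- integral bounds
    have hIU : ∫ z, f z ≤ (lam^2 + lam)/2 := by
      have h := integral_mono hf_int
        (integrable_poly_gauss (c*(lam^2/2)) (c*(lam*s)) (c*(s^2/2)) 0 0) hfU
      rw [integral_poly_gauss] at h
      calc ∫ z, f z ≤ (c*(lam^2/2) + c*(s^2/2) + 3*0) * Real.sqrt (2*Real.pi) := h
        _ = (lam^2 + lam)/2 := by
            rw [hs]
            linear_combination ((lam^2 + lam)/2) * hcs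
    have hLI : (lam^2 + lam)/2 - (lam^4 + 6*lam^3 + 3*lam^2)/4 ≤ ∫ z, f z := by
      have h := integral_mono
        (integrable_poly_gauss (c*(lam^2/2 - lam^4/4)) (c*(lam*s - lam^3*s))
          (c*(s^2/2 - 3*lam^2*s^2/2)) (c*(-(lam*s^3))) (c*(-(s^4/4)))) hf_int hLf
      rw [integral_poly_gauss] at h
      have hs4 : s ^ 4 = lam ^ 2 := by rw [show s^4 = (s^2)^2 by ring, hs]
      calc (lam^2 + lam)/2 - (lam^4 + 6*lam^3 + 3*lam^2)/4
          = (c*(lam^2/2 - lam^4/4) + c*(s^2/2 - 3*lam^2*s^2/2) + 3*(c*(-(s^4/4))))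
            * Real.sqrt (2*Real.pi) := by
            rw [hs4, hs]
            linear_combination (-((lam^2 + lam)/2 - (lam^4 + 6*lam^3 + 3*lam^2)/4)) * hcs
        _ ≤ ∫ z, f z := h
    have hIeq : (∫ z : ℝ, (1 / Real.sqrt (2 * Real.pi)) * Real.exp (-z ^ 2 / 2) *
        Real.log (Real.cosh (lam + Real.sqrt lam * z))) = ∫ z, f z := rfl
    rw [hIeq]
    have hlaminv : (0:ℝ) < 1 / lam := by positivity
    constructor
    · have h1 : lam - (lam^2 + lam)/2 ≤ lam - ∫ z, f z := by linarith
      have h2 := mul_le_mul_of_nonneg_left h1 hlaminv.le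
      have h3 : (1/lam) * (lam - (lam^2 + lam)/2) = 1/2 - lam/2 := by
        field_simp
        ring
      linarith
    · have h1 : lam - ∫ z, f z ≤ lam - ((lam^2 + lam)/2 - (lam^4 + 6*lam^3 + 3*lam^2)/4) := by
        linarith
      have h2 := mul_le_mul_of_nonneg_left h1 hlaminv.le
      have h3 : (1/lam) * (lam - ((lam^2 + lam)/2 - (lam^4 + 6*lam^3 + 3*lam^2)/4))
          = 1/2 - lam/2 + (lam^3 + 6*lam^2 + 3*lam)/4 := by
        field_simp
        ring
      linarith
  have hlo : Tendsto (fun l : ℝ => 1/2 - l/2) (nhdsWithin 0 (Set.Ioi 0)) (nhds (1/2 : ℝ)) := by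
    have hcont : Continuous (fun l : ℝ => 1/2 - l/2) :=
      continuous_const.sub (continuous_id.div_const 2)
    have := (hcont.tendsto 0).mono_left (nhdsWithin_le_nhds (s := Set.Ioi 0))
    simpa using this
  have hhi : Tendsto (fun l : ℝ => 1/2 - l/2 + (l^3 + 6*l^2 + 3*l)/4)
      (nhdsWithin 0 (Set.Ioi 0)) (nhds (1/2 : ℝ)) := by
    have hcont : Continuous (fun l : ℝ => 1/2 - l/2 + (l^3 + 6*l^2 + 3*l)/4) :=
      (continuous_const.sub (continuous_id.div_const 2)).add
        ((((continuous_pow 3).add (continuous_const.mul (continuous_pow 2))).add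
          (continuous_const.mul continuous_id)).div_const 4)
    have := (hcont.tendsto 0).mono_left (nhdsWithin_le_nhds (s := Set.Ioi 0))
    simpa using this
  refine tendsto_of_tendsto_of_tendsto_of_le_of_le' hlo hhi ?_ ?_
  · filter_upwards [self_mem_nhdsWithin] with lam hlam using (key lam hlam).1
  · filter_upwards [self_mem_nhdsWithin] with lam hlam using (key lam hlam).2
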